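/- For every real number a > √(π/2) there exists a nonconstant, twice continuously differentiable function f : ℝ → ℝ such that f''(x) = 8π(1 − exp(f(x))) for all x ∈ ℝ and f(x + a) = f(x) for all x ∈ ℝ. -/

import Mathlib

open Real

noncomputable section Vortex

open MeasureTheory intervalIntegral Set Filter

namespace VortexAux

/-- `q y = 2∫₀¹ (1-t) e^{ty} dt`, a smooth positive function with `y² q y = 2(e^y - y - 1)`. -/
def q (y : ℝ) : ℝ := 2 * ∫ t in (0:ℝ)..1, (1 - t) * Real.exp (t * y)

def q1 (y : ℝ) : ℝ := 2 * ∫ t in (0:ℝ)..1, ((1 - t) * t) * Real.exp (t * y)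

lemma q_eq (y : ℝ) : y ^ 2 * q y = 2 * (Real.exp y - y - 1) := by
  rcases eq_or_ne y 0 with rfl | hy
  · simp
  have key : ∫ t in (0:ℝ)..1, (1 - t) * Real.exp (t * y)
      = Real.exp y / y ^ 2 - (1 / y + 1 / y ^ 2) := by
    have h : ∀ t ∈ Set.uIcc (0:ℝ) 1,
        HasDerivAt (fun t : ℝ => (1 - t) * Real.exp (t * y) / y + Real.exp (t * y) / y ^ 2)
          ((1 - t) * Real.exp (t * y)) t := by
      intro t _
      have he : HasDerivAt (fun t : ℝ => Real.exp (t * y)) (Real.exp (t * y) * y) t := by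
        simpa [Function.comp_def] using (Real.hasDerivAt_exp (t * y)).comp t ((hasDerivAt_id t).mul_const y)
      have h1 : HasDerivAt (fun t : ℝ => (1 - t) * Real.exp (t * y) / y)
          (((-1) * Real.exp (t * y) + (1 - t) * (Real.exp (t * y) * y)) / y) t := by
        simpa using (((hasDerivAt_const t (1:ℝ)).sub (hasDerivAt_id t)).mul he).div_const y
      have h2 : HasDerivAt (fun t : ℝ => Real.exp (t * y) / y ^ 2)
          ((Real.exp (t * y) * y) / y ^ 2) t := he.div_const _
      refine (h1.add h2).congr_deriv (Eq.symm ?_)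
      field_simp
      ring
    have hint : IntervalIntegrable (fun t : ℝ => (1 - t) * Real.exp (t * y)) volume 0 1 := by
      apply Continuous.intervalIntegrable; continuity
    rw [intervalIntegral.integral_eq_sub_of_hasDerivAt h hint]
    field_simp
    simp
  rw [q, key]
  field_simp
  ring

lemma q_pos (y : ℝ) : 0 < q y := by
  rw [q]
  have : 0 < ∫ t in (0:ℝ)..1, (1 - t) * Real.exp (t * y) := by
    apply intervalIntegral.intervalIntegral_pos_of_pos_on
    · apply Continuous.intervalIntegrable; continuity
    · intro t ht
      exact mul_pos (by linarith [ht.2]) (Real.exp_pos _)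
    · norm_num
  linarith

lemma q_zero : q 0 = 1 := by
  rw [q]
  simp [intervalIntegral.integral_sub intervalIntegrable_const
    (intervalIntegral.intervalIntegrable_id)]
  norm_num

lemma hasDerivAt_q (y : ℝ) : HasDerivAt q (q1 y) y := by
  have key := intervalIntegral.hasDerivAt_integral_of_dominated_loc_of_deriv_le
    (F := fun (x : ℝ) (t : ℝ) => (1 - t) * Real.exp (t * x))
    (F' := fun (x : ℝ) (t : ℝ) => ((1 - t) * t) * Real.exp (t * x))
    (x₀ := y) (a := (0:ℝ)) (b := 1) (μ := volume)
    (bound := fun _ => Real.exp (|y| + 1)) (s := Metric.ball y 1) (Metric.ball_mem_nhds y one_pos)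
    ?_ ?_ ?_ ?_ ?_ ?_
  · exact key.2.const_mul 2
  · filter_upwards with x
    exact (Continuous.aestronglyMeasurable (by continuity))
  · apply Continuous.intervalIntegrable; continuity
  · exact (Continuous.aestronglyMeasurable (by continuity))
  · apply ae_of_all
    intro t ht x hx
    rw [Set.uIoc_of_le (by norm_num : (0:ℝ) ≤ 1)] at ht
    have h1 : |1 - t| ≤ 1 := by rw [abs_le]; constructor <;> [linarith [ht.2]; linarith [ht.1]]
    have h2 : |t| ≤ 1 := by rw [abs_le]; constructor <;> [linarith [ht.1]; linarith [ht.2]]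
    have h3 : t * x ≤ |y| + 1 := by
      have : |x| ≤ |y| + 1 := by
        have := mem_ball_iff_norm.mp hx
        have : |x - y| ≤ 1 := le_of_lt (by simpa [Real.norm_eq_abs] using this)
        calc |x| = |y + (x - y)| := by ring_nf
        _ ≤ |y| + |x - y| := abs_add_le _ _
        _ ≤ |y| + 1 := by linarith
      calc t * x ≤ |t * x| := le_abs_self _
      _ = |t| * |x| := abs_mul _ _
      _ ≤ 1 * (|y| + 1) := by
          apply mul_le_mul h2 this (abs_nonneg _) (by norm_num)
      _ = |y| + 1 := one_mul _
    calc ‖(1 - t) * t * Real.exp (t * x)‖ = |1 - t| * |t| * Real.exp (t * x) := by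
          rw [Real.norm_eq_abs, abs_mul, abs_mul, abs_of_pos (Real.exp_pos _)]
    _ ≤ 1 * 1 * Real.exp (|y| + 1) := by
        apply mul_le_mul (mul_le_mul h1 h2 (abs_nonneg _) (by norm_num))
          (Real.exp_le_exp.mpr h3) (Real.exp_pos _).le (by norm_num)
    _ = Real.exp (|y| + 1) := by ring
  · exact intervalIntegrable_const
  · apply ae_of_all
    intro t _ x _
    have he : HasDerivAt (fun x : ℝ => Real.exp (t * x)) (Real.exp (t * x) * t) x := by
      simpa [Function.comp_def] using (Real.hasDerivAt_exp (t * x)).comp x ((hasDerivAt_id x).const_mul t)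
    have := he.const_mul (1 - t)
    refine this.congr_deriv (Eq.symm ?_)
    ring

lemma continuous_q : Continuous q :=
  continuous_iff_continuousAt.mpr fun y => (hasDerivAt_q y).continuousAt

lemma continuous_q1 : Continuous q1 := by
  apply Continuous.mul continuous_const
  apply intervalIntegral.continuous_parametric_intervalIntegral_of_continuous'
  apply Continuous.mul (by continuity)
  exact Real.continuous_exp.comp (by continuity)

lemma q1_pos (y : ℝ) : 0 < q1 y := by
  rw [q1]
  have : 0 < ∫ t in (0:ℝ)..1, ((1 - t) * t) * Real.exp (t * y) := by
    apply intervalIntegral.intervalIntegral_pos_of_pos_on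
    · apply Continuous.intervalIntegrable; continuity
    · intro t ht
      exact mul_pos (mul_pos (by linarith [ht.2]) ht.1) (Real.exp_pos _)
    · norm_num
  linarith

lemma q_deriv_identity (y : ℝ) :
    2 * y * q y + y ^ 2 * q1 y = 2 * (Real.exp y - 1) := by
  have h1 : HasDerivAt (fun y : ℝ => y ^ 2 * q y) (2 * y * q y + y ^ 2 * q1 y) y := by
    have := (hasDerivAt_pow 2 y).mul (hasDerivAt_q y)
    refine this.congr_deriv (Eq.symm ?_)
    norm_num
  have h2 : HasDerivAt (fun y : ℝ => 2 * (Real.exp y - y - 1)) (2 * (Real.exp y - 1)) y := by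
    simpa using (((Real.hasDerivAt_exp y).sub (hasDerivAt_id y)).sub_const 1).const_mul 2
  have hfun : (fun y : ℝ => y ^ 2 * q y) = fun y : ℝ => 2 * (Real.exp y - y - 1) :=
    funext q_eq
  rw [hfun] at h1
  exact h1.unique h2


/-- `W y = sign(y) √(V y)` where `V y = 8π(e^y - y - 1)`; smooth since `V = 4π y² q y`. -/
def W (y : ℝ) : ℝ := 2 * Real.sqrt π * (y * Real.sqrt (q y))

def W1 (y : ℝ) : ℝ := Real.sqrt π / Real.sqrt (q y) * (2 * q y + y * q1 y)

lemma sqrt_q_pos (y : ℝ) : 0 < Real.sqrt (q y) := Real.sqrt_pos.mpr (q_pos y)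

lemma hasDerivAt_W (y : ℝ) : HasDerivAt W (W1 y) y := by
  have hs : HasDerivAt (fun y => Real.sqrt (q y)) (1 / (2 * Real.sqrt (q y)) * q1 y) y :=
    (Real.hasDerivAt_sqrt (ne_of_gt (q_pos y))).comp y (hasDerivAt_q y)
  have h := ((hasDerivAt_id y).mul hs).const_mul (2 * Real.sqrt π)
  have hq : Real.sqrt (q y) * Real.sqrt (q y) = q y := Real.mul_self_sqrt (q_pos y).le
  have hqne : Real.sqrt (q y) ≠ 0 := (sqrt_q_pos y).ne'
  refine h.congr_deriv (Eq.symm ?_)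
  rw [W1]
  simp only [id_eq]
  have hinv := mul_inv_cancel₀ hqne
  linear_combination (-(2 * Real.sqrt π * (Real.sqrt (q y))⁻¹)) * hq
    + (2 * Real.sqrt π * Real.sqrt (q y)) * hinv

lemma W_sq (y : ℝ) : W y ^ 2 = 8 * π * (Real.exp y - y - 1) := by
  have hπ : Real.sqrt π ^ 2 = π := Real.sq_sqrt pi_pos.le
  have hq : Real.sqrt (q y) ^ 2 = q y := Real.sq_sqrt (q_pos y).le
  have e1 : W y ^ 2 = 4 * Real.sqrt π ^ 2 * (y ^ 2 * Real.sqrt (q y) ^ 2) := by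
    rw [W]; ring
  rw [e1, hπ, hq]
  linear_combination 4 * π * (q_eq y)

lemma W1_pos (y : ℝ) : 0 < W1 y := by
  have hfac : 0 < Real.sqrt π / Real.sqrt (q y) :=
    div_pos (Real.sqrt_pos.mpr pi_pos) (sqrt_q_pos y)
  have key : y * (2 * q y + y * q1 y) = 2 * (Real.exp y - 1) := by
    linear_combination q_deriv_identity y
  apply mul_pos hfac
  rcases lt_trichotomy y 0 with hy | rfl | hy
  · have h1 : Real.exp y < 1 := Real.exp_lt_one_iff.mpr hy
    nlinarith
  · simp [q_zero]
  · have h1 : 1 < Real.exp y := by nlinarith [Real.add_one_le_exp y]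
    nlinarith

lemma two_W_W1 (y : ℝ) : 2 * W y * W1 y = 8 * π * (Real.exp y - 1) := by
  have hq : Real.sqrt (q y) * Real.sqrt (q y) = q y := Real.mul_self_sqrt (q_pos y).le
  have hπ : Real.sqrt π * Real.sqrt π = π := Real.mul_self_sqrt pi_pos.le
  have hqne : Real.sqrt (q y) ≠ 0 := (sqrt_q_pos y).ne'
  have key := q_deriv_identity y
  rw [W, W1, div_eq_mul_inv]
  have hinv := mul_inv_cancel₀ hqne
  linear_combination (4 * y * Real.sqrt π * Real.sqrt π * (2 * q y + y * q1 y)) * hinv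
    + (4 * y * (2 * q y + y * q1 y)) * hπ + (4 * π) * key

lemma W_zero : W 0 = 0 := by simp [W]

lemma W_strictMono : StrictMono W := strictMono_of_hasDerivAt_pos hasDerivAt_W W1_pos

lemma continuous_W : Continuous W :=
  continuous_iff_continuousAt.mpr fun y => (hasDerivAt_W y).continuousAt

lemma continuous_W1 : Continuous W1 := by
  apply Continuous.mul
  · exact continuous_const.div (Real.continuous_sqrt.comp continuous_q)
      (fun y => (sqrt_q_pos y).ne')
  · exact (continuous_const.mul continuous_q).add (continuous_id.mul continuous_q1)

lemma q_monotone : Monotone q :=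
  (strictMono_of_hasDerivAt_pos hasDerivAt_q q1_pos).monotone

lemma le_W {y : ℝ} (hy : 0 ≤ y) : y ≤ W y := by
  have h1 : (1:ℝ) ≤ Real.sqrt π := by
    rw [show (1:ℝ) = Real.sqrt 1 by simp]
    exact Real.sqrt_le_sqrt (by linarith [Real.pi_gt_three])
  have h2 : (1:ℝ) ≤ Real.sqrt (q y) := by
    rw [show (1:ℝ) = Real.sqrt 1 by simp]
    apply Real.sqrt_le_sqrt
    rw [← q_zero]
    exact q_monotone hy
  have h3 : (1:ℝ) ≤ Real.sqrt π * Real.sqrt (q y) := by nlinarith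
  rw [W]
  nlinarith [mul_le_mul_of_nonneg_left h3 hy]

lemma W_surjective : Function.Surjective W := by
  intro z
  rcases le_or_gt 0 z with hz | hz
  · have h1 : z ∈ Set.Icc (W 0) (W z) := by
      rw [W_zero]
      exact ⟨hz, le_W hz⟩
    obtain ⟨y, _, hy⟩ := intermediate_value_Icc (by linarith [le_W hz] : (0:ℝ) ≤ z)
      continuous_W.continuousOn h1
    exact ⟨y, hy⟩
  · set y₀ := -(1 + z ^ 2) with hy₀
    have hy₀neg : y₀ < 0 := by nlinarith [sq_nonneg z]
    have hWy₀neg : W y₀ < 0 := by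
      rw [← W_zero]
      exact W_strictMono hy₀neg
    have hsq : z ^ 2 ≤ W y₀ ^ 2 := by
      rw [W_sq]
      have := Real.exp_pos y₀
      have hπ := Real.pi_gt_three
      nlinarith
    have hle : W y₀ ≤ z := by
      nlinarith
    have h1 : z ∈ Set.Icc (W y₀) (W 0) := ⟨hle, by rw [W_zero]; exact hz.le⟩
    obtain ⟨y, _, hy⟩ := intermediate_value_Icc hy₀neg.le continuous_W.continuousOn h1
    exact ⟨y, hy⟩


def Wiso : ℝ ≃o ℝ := StrictMono.orderIsoOfSurjective W W_strictMono W_surjective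

def Wi : ℝ → ℝ := Wiso.symm

lemma coe_Wiso : (Wiso : ℝ → ℝ) = W := StrictMono.coe_orderIsoOfSurjective _ _ _

lemma W_Wi (z : ℝ) : W (Wi z) = z := by
  rw [← coe_Wiso]; exact Wiso.apply_symm_apply z

lemma Wi_W (y : ℝ) : Wi (W y) = y := by
  rw [Wi, ← coe_Wiso]; exact Wiso.symm_apply_apply y

lemma continuous_Wi : Continuous Wi := Wiso.symm.toHomeomorph.continuous

lemma Wi_strictMono : StrictMono Wi := Wiso.symm.strictMono

lemma Wi_zero : Wi 0 = 0 := by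
  have := Wi_W 0
  rwa [W_zero] at this


lemma hasDerivAt_Wi (z : ℝ) : HasDerivAt Wi (W1 (Wi z))⁻¹ z :=
  HasDerivAt.of_local_left_inverse continuous_Wi.continuousAt
    (hasDerivAt_W (Wi z)) (W1_pos _).ne' (Filter.Eventually.of_forall W_Wi)

/-- The angular speed of the angle variable along the energy-`E` orbit. -/
def Φ (E θ : ℝ) : ℝ := Real.sqrt 2 * W1 (Wi (Real.sqrt E * Real.sin θ))

lemma Φ_pos (E θ : ℝ) : 0 < Φ E θ :=
  mul_pos (Real.sqrt_pos.mpr two_pos) (W1_pos _)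

lemma continuous_Φ₂ : Continuous (fun p : ℝ × ℝ => (Φ p.1 p.2)⁻¹) := by
  apply Continuous.inv₀
  · exact continuous_const.mul (continuous_W1.comp (continuous_Wi.comp
      (((Real.continuous_sqrt.comp continuous_fst)).mul
        (Real.continuous_sin.comp continuous_snd))))
  · exact fun p => (Φ_pos p.1 p.2).ne'

lemma continuous_Φθ (E : ℝ) : Continuous (Φ E) :=
  continuous_const.mul (continuous_W1.comp (continuous_Wi.comp
    (continuous_const.mul Real.continuous_sin)))

lemma Φ_periodic (E : ℝ) : Function.Periodic (fun θ => (Φ E θ)⁻¹) (2 * π) := by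
  intro θ; simp [Φ, Real.sin_add_two_pi]

/-- Time as a function of angle. -/
def X (E θ : ℝ) : ℝ := ∫ τ in (0:ℝ)..θ, (Φ E τ)⁻¹

/-- The period of the energy-`E` orbit. -/
def T (E : ℝ) : ℝ := X E (2 * π)

lemma intInt (E a b : ℝ) : IntervalIntegrable (fun τ => (Φ E τ)⁻¹) volume a b :=
  (Continuous.inv₀ (continuous_Φθ E) fun τ => (Φ_pos E τ).ne').intervalIntegrable _ _

lemma hasDerivAt_X (E θ : ℝ) : HasDerivAt (X E) (Φ E θ)⁻¹ θ :=
  intervalIntegral.integral_hasDerivAt_right (intInt E 0 θ)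
    ((Continuous.inv₀ (continuous_Φθ E) fun τ => (Φ_pos E τ).ne').stronglyMeasurableAtFilter _ _)
    (Continuous.continuousAt (Continuous.inv₀ (continuous_Φθ E) fun τ => (Φ_pos E τ).ne'))

lemma X_strictMono (E : ℝ) : StrictMono (X E) :=
  strictMono_of_hasDerivAt_pos (hasDerivAt_X E) (fun θ => inv_pos.mpr (Φ_pos E θ))

lemma continuous_X (E : ℝ) : Continuous (X E) :=
  continuous_iff_continuousAt.mpr fun θ => (hasDerivAt_X E θ).continuousAt

lemma X_zero (E : ℝ) : X E 0 = 0 := intervalIntegral.integral_same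

lemma T_pos (E : ℝ) : 0 < T E := by
  have := X_strictMono E (show (0:ℝ) < 2 * π by positivity)
  rwa [X_zero] at this

lemma X_add (E θ : ℝ) : X E (θ + 2 * π) = X E θ + T E := by
  have h1 : X E (θ + 2 * π) - X E θ = ∫ τ in θ..(θ + 2 * π), (Φ E τ)⁻¹ := by
    rw [X, X, intervalIntegral.integral_interval_sub_left (intInt E 0 (θ + 2 * π)) (intInt E 0 θ)]
  have h2 := (Φ_periodic E).intervalIntegral_add_eq θ 0
  rw [h2] at h1
  have : T E = ∫ τ in (0:ℝ)..(0 + 2 * π), (Φ E τ)⁻¹ := by rw [T, X, zero_add]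
  linarith

lemma X_sub (E θ : ℝ) : X E (θ - 2 * π) = X E θ - T E := by
  have := X_add E (θ - 2 * π)
  rw [sub_add_cancel] at this
  linarith

lemma X_nat (E : ℝ) (n : ℕ) : X E (2 * π * n) = n * T E := by
  induction n with
  | zero => simp [X_zero]
  | succ k ih =>
    have : (2 : ℝ) * π * (k + 1 : ℕ) = 2 * π * k + 2 * π := by push_cast; ring
    rw [this, X_add, ih]
    push_cast; ring

lemma X_neg_nat (E : ℝ) (n : ℕ) : X E (-(2 * π * n)) = -(n * T E) := by
  induction n with
  | zero => simp [X_zero]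
  | succ k ih =>
    have : -((2 : ℝ) * π * (k + 1 : ℕ)) = -(2 * π * k) - 2 * π := by push_cast; ring
    rw [this, X_sub, ih]
    push_cast; ring

lemma X_surjective (E : ℝ) : Function.Surjective (X E) := by
  apply Continuous.surjective (continuous_X E)
  · apply tendsto_atTop_atTop_of_monotone (X_strictMono E).monotone
    intro b
    obtain ⟨n, hn⟩ := exists_nat_ge (b / T E)
    refine ⟨2 * π * n, ?_⟩
    rw [X_nat]
    rw [div_le_iff₀ (T_pos E)] at hn
    linarith
  · apply tendsto_atBot_atBot_of_monotone (X_strictMono E).monotone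
    intro b
    obtain ⟨n, hn⟩ := exists_nat_ge (-b / T E)
    refine ⟨-(2 * π * n), ?_⟩
    rw [X_neg_nat]
    rw [div_le_iff₀ (T_pos E)] at hn
    linarith

def Θiso (E : ℝ) : ℝ ≃o ℝ :=
  StrictMono.orderIsoOfSurjective (X E) (X_strictMono E) (X_surjective E)

/-- The angle variable as a function of time. -/
def Θ (E : ℝ) : ℝ → ℝ := (Θiso E).symm

lemma coe_Θiso (E : ℝ) : (Θiso E : ℝ → ℝ) = X E := StrictMono.coe_orderIsoOfSurjective _ _ _

lemma X_Θ (E x : ℝ) : X E (Θ E x) = x := by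
  rw [← coe_Θiso]; exact (Θiso E).apply_symm_apply x

lemma Θ_X (E θ : ℝ) : Θ E (X E θ) = θ := by
  rw [Θ, ← coe_Θiso]; exact (Θiso E).symm_apply_apply θ

lemma continuous_Θ (E : ℝ) : Continuous (Θ E) := (Θiso E).symm.toHomeomorph.continuous

lemma Θ_surjective (E : ℝ) : Function.Surjective (Θ E) := (Θiso E).symm.surjective

lemma hasDerivAt_Θ (E x : ℝ) : HasDerivAt (Θ E) (Φ E (Θ E x)) x := by
  have := HasDerivAt.of_local_left_inverse (continuous_Θ E).continuousAt
    (hasDerivAt_X E (Θ E x)) (inv_pos.mpr (Φ_pos E (Θ E x))).ne'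
    (Filter.Eventually.of_forall (X_Θ E))
  simpa [inv_inv] using this

lemma Θ_add (E x : ℝ) : Θ E (x + T E) = Θ E x + 2 * π := by
  apply (X_strictMono E).injective
  rw [X_Θ, X_add, X_Θ]


/-- The periodic solution with energy `E`. -/
def F (E x : ℝ) : ℝ := Wi (Real.sqrt E * Real.sin (Θ E x))

lemma W_F (E x : ℝ) : W (F E x) = Real.sqrt E * Real.sin (Θ E x) := W_Wi _

lemma continuous_F (E : ℝ) : Continuous (F E) :=
  continuous_Wi.comp (continuous_const.mul (Real.continuous_sin.comp (continuous_Θ E)))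

lemma hasDerivAt_F (E x : ℝ) :
    HasDerivAt (F E) (Real.sqrt (2 * E) * Real.cos (Θ E x)) x := by
  have hinner : HasDerivAt (fun x => Real.sqrt E * Real.sin (Θ E x))
      (Real.sqrt E * (Real.cos (Θ E x) * Φ E (Θ E x))) x :=
    ((Real.hasDerivAt_sin (Θ E x)).comp x (hasDerivAt_Θ E x)).const_mul _
  have houter := hasDerivAt_Wi (Real.sqrt E * Real.sin (Θ E x))
  have h : HasDerivAt (F E)
      ((W1 (Wi (Real.sqrt E * Real.sin (Θ E x))))⁻¹
        * (Real.sqrt E * (Real.cos (Θ E x) * Φ E (Θ E x)))) x := houter.comp x hinner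
  convert h using 1
  rw [Φ]
  have hW1 : W1 (Wi (Real.sqrt E * Real.sin (Θ E x))) ≠ 0 := (W1_pos _).ne'
  rw [Real.sqrt_mul (by norm_num : (0:ℝ) ≤ 2) E]
  field_simp

lemma hasDerivAt_F' (E x : ℝ) :
    HasDerivAt (fun x => Real.sqrt (2 * E) * Real.cos (Θ E x))
      (8 * π * (1 - Real.exp (F E x))) x := by
  have h := ((Real.hasDerivAt_cos (Θ E x)).comp x (hasDerivAt_Θ E x)).const_mul
    (Real.sqrt (2 * E))
  refine h.congr_deriv (Eq.symm ?_)
  have key := two_W_W1 (F E x)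
  have hWF := W_F E x
  have h48 : Real.sqrt (2 * E) * Real.sqrt 2 = 2 * Real.sqrt E := by
    rw [Real.sqrt_mul (by norm_num : (0:ℝ) ≤ 2) E]
    have h2 : Real.sqrt 2 * Real.sqrt 2 = 2 := Real.mul_self_sqrt (by norm_num)
    linear_combination Real.sqrt E * h2
  have hF : Wi (Real.sqrt E * Real.sin (Θ E x)) = F E x := rfl
  rw [Φ, hF]
  linear_combination key + (Real.sin (Θ E x) * W1 (F E x)) * h48
    - (2 * W1 (F E x)) * hWF

lemma F_periodic (E x : ℝ) : F E (x + T E) = F E x := by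
  rw [F, F, Θ_add, Real.sin_add_two_pi]


lemma continuous_T : Continuous T := by
  have h : Continuous (Function.uncurry fun E τ : ℝ => (Φ E τ)⁻¹) := continuous_Φ₂
  have : T = fun E => ∫ τ in (0:ℝ)..(2*π), (Φ E τ)⁻¹ := rfl
  rw [this]
  exact intervalIntegral.continuous_parametric_intervalIntegral_of_continuous' h 0 (2*π)

lemma W1_zero : W1 0 = 2 * Real.sqrt π := by
  rw [W1, q_zero]; simp; ring

lemma T_zero : T 0 = Real.sqrt (π / 2) := by
  have hΦ0 : ∀ τ : ℝ, (Φ 0 τ)⁻¹ = (2 * Real.sqrt 2 * Real.sqrt π)⁻¹ := by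
    intro τ
    rw [Φ, Real.sqrt_zero, zero_mul, Wi_zero, W1_zero]
    ring_nf
  have hT : T 0 = ∫ τ in (0:ℝ)..(2*π), (2 * Real.sqrt 2 * Real.sqrt π)⁻¹ := by
    rw [T, X]
    congr 1
    funext τ
    exact hΦ0 τ
  rw [hT, intervalIntegral.integral_const, smul_eq_mul]
  have hπ : Real.sqrt π * Real.sqrt π = π := Real.mul_self_sqrt pi_pos.le
  have h2 : Real.sqrt 2 * Real.sqrt 2 = 2 := Real.mul_self_sqrt (by norm_num)
  have hd : Real.sqrt (π / 2) = Real.sqrt π / Real.sqrt 2 := by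
    rw [Real.sqrt_div pi_pos.le]
  rw [hd]
  have hπpos := Real.sqrt_pos.mpr pi_pos
  have h2pos : (0:ℝ) < Real.sqrt 2 := Real.sqrt_pos.mpr (by norm_num)
  field_simp
  linear_combination (-2) * hπ

lemma sin_le_on_interval {τ : ℝ} (h1 : 5*π/4 ≤ τ) (h2 : τ ≤ 7*π/4) :
    Real.sin τ ≤ -(1/2) := by
  have hs32 : Real.sin (3*π/2) = -1 := by
    rw [show (3*π/2 : ℝ) = π + π/2 by ring, Real.sin_add]; simp
  have hc32 : Real.cos (3*π/2) = 0 := by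
    rw [show (3*π/2 : ℝ) = π + π/2 by ring, Real.cos_add]; simp
  have hτ : Real.sin τ = -Real.cos (τ - 3*π/2) := by
    rw [show τ = (τ - 3*π/2) + 3*π/2 by ring, Real.sin_add, hs32, hc32]
    ring_nf
  rw [hτ]
  have habs : |τ - 3*π/2| ≤ π/4 := by
    rw [abs_le]; constructor <;> [linarith; linarith]
  have hcos : Real.cos (π/4) ≤ Real.cos |τ - 3*π/2| :=
    Real.cos_le_cos_of_nonneg_of_le_pi (abs_nonneg _) (by linarith [pi_pos]) habs
  rw [Real.cos_abs] at hcos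
  have h14 : (1:ℝ)/2 ≤ Real.cos (π/4) := by
    rw [Real.cos_pi_div_four]
    have : (1:ℝ) ≤ Real.sqrt 2 := by
      rw [show (1:ℝ) = Real.sqrt 1 by simp]
      exact Real.sqrt_le_sqrt (by norm_num)
    linarith
  linarith

lemma T_large {E : ℝ} (hE : 0 < E) : Real.sqrt E / 24 ≤ T E := by
  have hsE : 0 < Real.sqrt E := Real.sqrt_pos.mpr hE
  have hpt : ∀ τ ∈ Set.Icc (5*π/4) (7*π/4), Real.sqrt E / 36 ≤ (Φ E τ)⁻¹ := by
    intro τ hτ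
    have hsin := sin_le_on_interval hτ.1 hτ.2
    have hz : Real.sqrt E * Real.sin τ ≤ -(Real.sqrt E / 2) := by nlinarith
    set z := Real.sqrt E * Real.sin τ with hzdef
    have hzneg : z < 0 := by linarith
    set y := Wi z with hydef
    have hWy : W y = z := W_Wi z
    have key := two_W_W1 y
    rw [hWy] at key
    have hexp : Real.exp y > 0 := Real.exp_pos y
    have hW1pos := W1_pos y
    have hW1 : W1 y * Real.sqrt E ≤ 8 * π := by
      nlinarith [mul_le_mul_of_nonneg_right
        (show 2*z ≤ -Real.sqrt E by linarith) hW1pos.le, pi_pos, hexp]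
    have hW1le : W1 y ≤ 8*π/Real.sqrt E := by
      rw [le_div_iff₀ hsE]; linarith
    have h142 : Real.sqrt 2 ≤ 1.42 := by
      rw [show (1.42:ℝ) = Real.sqrt (1.42^2) by rw [Real.sqrt_sq]; norm_num]
      exact Real.sqrt_le_sqrt (by norm_num)
    have hπ315 : π < 3.15 := by
      have := Real.pi_lt_d2
      linarith
    have hΦle : Φ E τ ≤ 36 / Real.sqrt E := by
      have e1 : Φ E τ = Real.sqrt 2 * W1 y := by rw [Φ, ← hzdef, ← hydef]
      rw [e1]
      calc Real.sqrt 2 * W1 y ≤ 1.42 * (8*π/Real.sqrt E) :=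
            mul_le_mul h142 hW1le hW1pos.le (by norm_num)
      _ = (11.36*π)/Real.sqrt E := by ring
      _ ≤ 36 / Real.sqrt E := by
          have h36 : (11.36:ℝ)*π ≤ 36 := by nlinarith
          exact (div_le_div_iff_of_pos_right hsE).mpr h36
    have hΦpos := Φ_pos E τ
    have h1d := one_div_le_one_div_of_le hΦpos hΦle
    rw [one_div_div] at h1d
    rw [inv_eq_one_div]
    exact h1d
  have hsub : ∫ τ in (5*π/4)..(7*π/4), (Φ E τ)⁻¹ ≤ T E := by
    rw [T, X]
    apply intervalIntegral.integral_mono_interval (by positivity)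
      (by linarith [pi_pos]) (by linarith [pi_pos])
      (ae_of_all _ fun τ => (inv_pos.mpr (Φ_pos E τ)).le) (intInt E 0 (2*π))
  have hconst : (7*π/4 - 5*π/4) * (Real.sqrt E / 36)
      ≤ ∫ τ in (5*π/4)..(7*π/4), (Φ E τ)⁻¹ := by
    have h := intervalIntegral.integral_mono_on (by linarith [pi_pos])
      intervalIntegrable_const (intInt E _ _) hpt
    rwa [intervalIntegral.integral_const, smul_eq_mul] at h
  nlinarith [pi_gt_three, hsE.le]

end VortexAux

end Vortex

open VortexAux in
/-- For every `a > √(π/2)` there is a nonconstant `C²` function `f : ℝ → ℝ`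
solving `f'' = 8π(1 − e^f)` on `ℝ` with period `a`. -/
theorem exists_nonconstant_periodic_solution
    (a : ℝ) (ha : Real.sqrt (π / 2) < a) :
    ∃ f : ℝ → ℝ, ContDiff ℝ 2 f ∧ (∃ x y, f x ≠ f y) ∧
      (∀ x, deriv (deriv f) x = 8 * π * (1 - Real.exp (f x))) ∧
      (∀ x, f (x + a) = f x) := by
  have ha0 : 0 < a := lt_of_le_of_lt (Real.sqrt_nonneg _) ha
  set E₁ : ℝ := (24*a)^2 with hE₁def
  have hE₁pos : 0 < E₁ := by positivity
  have hTE₁ : a ≤ T E₁ := by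
    have h : Real.sqrt E₁ = 24*a := by
      rw [hE₁def, Real.sqrt_sq (by positivity)]
    have h2 := T_large hE₁pos
    rw [h] at h2
    linarith
  have hmem : a ∈ Set.Icc (T 0) (T E₁) := ⟨by rw [T_zero]; exact ha.le, hTE₁⟩
  obtain ⟨E, hEmem, hTE⟩ :=
    intermediate_value_Icc hE₁pos.le continuous_T.continuousOn hmem
  have hEpos : 0 < E := by
    rcases eq_or_lt_of_le hEmem.1 with h | h
    · exfalso
      rw [← h, T_zero] at hTE
      exact absurd hTE (ne_of_lt ha)
    · exact h
  have hsE : 0 < Real.sqrt E := Real.sqrt_pos.mpr hEpos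
  have hd1 : ∀ x, HasDerivAt (F E) (Real.sqrt (2*E) * Real.cos (Θ E x)) x := hasDerivAt_F E
  have hderiv1 : deriv (F E) = fun x => Real.sqrt (2*E) * Real.cos (Θ E x) :=
    funext fun x => (hd1 x).deriv
  have hd2 : ∀ x, HasDerivAt (fun x => Real.sqrt (2*E) * Real.cos (Θ E x))
      (8 * π * (1 - Real.exp (F E x))) x := hasDerivAt_F' E
  have hderiv2 : deriv (deriv (F E)) = fun x => 8 * π * (1 - Real.exp (F E x)) := by
    rw [hderiv1]
    exact funext fun x => (hd2 x).deriv
  refine ⟨F E, ?_, ?_, ?_, ?_⟩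
  · rw [show (2 : WithTop ℕ∞) = 1 + 1 by norm_num, contDiff_succ_iff_deriv]
    refine ⟨fun x => (hd1 x).differentiableAt, by simp, ?_⟩
    rw [hderiv1, contDiff_one_iff_deriv]
    refine ⟨fun x => (hd2 x).differentiableAt, ?_⟩
    rw [funext fun x => (hd2 x).deriv]
    exact continuous_const.mul
      (continuous_const.sub (Real.continuous_exp.comp (continuous_F E)))
  · obtain ⟨x₁, hx₁⟩ := Θ_surjective E (π/2)
    obtain ⟨x₂, hx₂⟩ := Θ_surjective E (-(π/2))
    refine ⟨x₂, x₁, ?_⟩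
    have e1 : F E x₁ = Wi (Real.sqrt E) := by
      rw [F, hx₁, Real.sin_pi_div_two, mul_one]
    have e2 : F E x₂ = Wi (-(Real.sqrt E)) := by
      rw [F, hx₂, Real.sin_neg, Real.sin_pi_div_two]
      norm_num
    rw [e1, e2]
    exact (Wi_strictMono (by linarith : -(Real.sqrt E) < Real.sqrt E)).ne
  · intro x
    rw [hderiv2]
  · intro x
    rw [← hTE]
    exact F_periodic E x
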